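/- Let τ(u,v) be a family of positive semidefinite operators indexed by a finite set U × V with total trace at most 1, and σ(v) a family indexed by V with total trace 1. Suppose τ(u,v) ≤ p·σ(v) for all u,v, and p·|U| ≥ 1. Then there exists a family ρ(u,v) of positive semidefinite operators with total trace exactly 1 such that τ(u,v) ≤ ρ(u,v) ≤ p·σ(v) for all u,v. -/

import Mathlib

open scoped Matrix BigOperators Classical ComplexOrder

noncomputable section

/-- Real part of the trace of a complex matrix. -/
def rtr {d : ℕ} (M : Matrix (Fin d) (Fin d) ℂ) : ℝ := (Matrix.trace M).re

/-- Functional calculus applied to a matrix (junk value `0` if the matrix is not Hermitian). -/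
def mfun {d : ℕ} (f : ℝ → ℝ) (A : Matrix (Fin d) (Fin d) ℂ) : Matrix (Fin d) (Fin d) ℂ :=
  if h : A.IsHermitian then h.cfc f else 0

/-- Positive part `[A]₊` of a Hermitian matrix. -/
def posPartM {d : ℕ} (A : Matrix (Fin d) (Fin d) ℂ) : Matrix (Fin d) (Fin d) ℂ :=
  mfun (fun x => max x 0) A

/-- Projector onto the support of the positive part of a Hermitian matrix. -/
def posSuppProj {d : ℕ} (A : Matrix (Fin d) (Fin d) ℂ) : Matrix (Fin d) (Fin d) ℂ :=
  mfun (fun x => if 0 < x then 1 else 0) A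

/-- Operator absolute value of a Hermitian matrix. -/
def absM {d : ℕ} (A : Matrix (Fin d) (Fin d) ℂ) : Matrix (Fin d) (Fin d) ℂ :=
  mfun (fun x => |x|) A

/-- Moore–Penrose (relative) power of a Hermitian matrix: `x ↦ x ^ p` on the support,
`0` on the kernel. -/
def mpow {d : ℕ} (A : Matrix (Fin d) (Fin d) ℂ) (p : ℝ) : Matrix (Fin d) (Fin d) ℂ :=
  mfun (fun x => if x = 0 then 0 else x ^ p) A

/-- Support containment: the kernel of `σ` is contained in the kernel of `ρ`,
i.e. `supp ρ ⊆ supp σ` for positive semidefinite matrices. -/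
def suppSubset {d : ℕ} (ρ σ : Matrix (Fin d) (Fin d) ℂ) : Prop :=
  ∀ v : Fin d → ℂ, σ.mulVec v = 0 → ρ.mulVec v = 0

/-- Sandwiched Rényi power `R_α(ρ|σ) = tr((σ^{-β/(2α)} ρ σ^{-β/(2α)})^α)`, `β = α - 1`. -/
def sandR {d : ℕ} (α : ℝ) (ρ σ : Matrix (Fin d) (Fin d) ℂ) : ℝ :=
  rtr (mpow (mpow σ (-(α - 1) / (2 * α)) * ρ * mpow σ (-(α - 1) / (2 * α))) α)

/-- Petz Rényi power `tr(ρ^α σ^{-β})`, `β = α - 1`. -/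
def petzR {d : ℕ} (α : ℝ) (ρ σ : Matrix (Fin d) (Fin d) ℂ) : ℝ :=
  rtr (mpow ρ α * mpow σ (-(α - 1)))


lemma psd_rsmul {d : ℕ} {A : Matrix (Fin d) (Fin d) ℂ} (hA : A.PosSemidef) {t : ℝ}
    (ht : 0 ≤ t) : ((t : ℂ) • A).PosSemidef := by
  refine ⟨?_, fun x => ?_⟩
  · have := hA.isHermitian
    unfold Matrix.IsHermitian at this ⊢
    rw [Matrix.conjTranspose_smul, this, Complex.star_def, Complex.conj_ofReal]
  · exact (hA.smul (Complex.zero_le_real.mpr ht)).2 x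

lemma rtr_add {d : ℕ} (A B : Matrix (Fin d) (Fin d) ℂ) : rtr (A + B) = rtr A + rtr B := by
  simp [rtr, Matrix.trace_add]

lemma rtr_rsmul {d : ℕ} (t : ℝ) (A : Matrix (Fin d) (Fin d) ℂ) :
    rtr ((t : ℂ) • A) = t * rtr A := by
  simp [rtr, Matrix.trace_smul, smul_eq_mul, Complex.mul_re]

lemma rtr_sub {d : ℕ} (A B : Matrix (Fin d) (Fin d) ℂ) : rtr (A - B) = rtr A - rtr B := by
  simp [rtr, Matrix.trace_sub]

/-- Filling in a subnormalized `τ(u,v) ≤ p σ(v)` to a normalized `ρ(u,v)` with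
`τ(u,v) ≤ ρ(u,v) ≤ p σ(v)`, provided `p |U| ≥ 1`. -/
theorem stmt4 {d : ℕ} {U V : Type*} [Fintype U] [Fintype V] [Nonempty U] [Nonempty V]
    (τ : U × V → Matrix (Fin d) (Fin d) ℂ) (σ : V → Matrix (Fin d) (Fin d) ℂ)
    (p : ℝ) (hp : 0 < p)
    (hτ : ∀ x, (τ x).PosSemidef) (hσ : ∀ v, (σ v).PosSemidef)
    (hτtr : ∑ x, rtr (τ x) ≤ 1) (hσtr : ∑ v, rtr (σ v) = 1)
    (hle : ∀ u v, ((p : ℂ) • σ v - τ (u, v)).PosSemidef)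
    (hcard : 1 ≤ p * Fintype.card U) :
    ∃ ρ : U × V → Matrix (Fin d) (Fin d) ℂ,
      (∀ x, (ρ x).PosSemidef) ∧ (∑ x, rtr (ρ x) = 1) ∧
      (∀ u v, (ρ (u, v) - τ (u, v)).PosSemidef) ∧
      (∀ u v, ((p : ℂ) • σ v - ρ (u, v)).PosSemidef) := by
  set T : ℝ := ∑ x, rtr (τ x) with hT
  set c : ℝ := p * Fintype.card U with hc
  by_cases hT1 : T = 1
  · refine ⟨τ, hτ, hT1, fun u v => by simpa using (Matrix.PosSemidef.zero), hle⟩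
  · have hTlt : T < 1 := lt_of_le_of_ne hτtr hT1
    have hden : 0 < c - T := by linarith
    set t : ℝ := (1 - T) / (c - T) with htdef
    have ht0 : 0 ≤ t := div_nonneg (by linarith) hden.le
    have ht1 : t ≤ 1 := by
      rw [div_le_one hden]; linarith
    refine ⟨fun x => τ x + (t : ℂ) • ((p : ℂ) • σ x.2 - τ x), ?_, ?_, ?_, ?_⟩
    · exact fun x => (hτ x).add (psd_rsmul (hle x.1 x.2) ht0)
    · have key : ∀ x : U × V, rtr (τ x + (t : ℂ) • ((p : ℂ) • σ x.2 - τ x)) =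
          rtr (τ x) + t * (p * rtr (σ x.2) - rtr (τ x)) := by
        intro x
        rw [rtr_add, rtr_rsmul, rtr_sub, rtr_rsmul]
      rw [Finset.sum_congr rfl (fun x _ => key x)]
      rw [Finset.sum_add_distrib, ← Finset.mul_sum, Finset.sum_sub_distrib, ← hT]
      have hσsum : ∑ x : U × V, p * rtr (σ x.2) = c := by
        rw [← Finset.univ_product_univ, Finset.sum_product]
        simp [← Finset.mul_sum, hσtr, hc, Finset.sum_const, nsmul_eq_mul, mul_comm]
      rw [hσsum, htdef]
      field_simp
      ring
    · intro u v
      have : τ (u, v) + (t : ℂ) • ((p : ℂ) • σ v - τ (u, v)) - τ (u, v) =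
          (t : ℂ) • ((p : ℂ) • σ v - τ (u, v)) := add_sub_cancel_left _ _
      rw [this]
      exact psd_rsmul (hle u v) ht0
    · intro u v
      have : (p : ℂ) • σ v - (τ (u, v) + (t : ℂ) • ((p : ℂ) • σ v - τ (u, v))) =
          ((1 - t : ℝ) : ℂ) • ((p : ℂ) • σ v - τ (u, v)) := by
        push_cast
        rw [sub_smul, one_smul, smul_sub]
        abel
      rw [this]
      exact psd_rsmul (hle u v) (by linarith)
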